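/- Walk probability: for every stochastic graph 𝒢 = (V, E, w), every probabilistic suspect set 𝒱_I = (V_I, p), and every fixed finite sequence h = ⟨v₁,…,v_l⟩ of pairwise distinct nodes with v_l ∈ V_I, the probability over the random pair (g, X) that h is an HSAW of (g, X) equals p(v_l) · ∏_{u ∈ V_I ∩ {v₁,…,v_{l−1}}} (1 − p(u)) · ∏_{i=1}^{l−1} w(v_{i+1}, v_i). -/

import Mathlib

noncomputable section
open scoped Classical

/-- Probability of a live-edge sample `g : V → Option V` under weights `w`:
independently for each node `v`, `g v = some u` with probability `w u v` and
`g v = none` with probability `1 − ∑_u w u v`. -/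
def sampleProb {V : Type} [Fintype V] (w : V → V → ℝ) (g : V → Option V) : ℝ :=
  ∏ v : V, (g v).elim (1 - ∑ u : V, w u v) (fun u => w u v)

/-- `v` is reachable from the seed set `S` in the sample graph of `g`,
which has an edge `(u, v)` exactly when `g v = some u`. -/
def Reachable {V : Type} (g : V → Option V) (S : Finset V) (v : V) : Prop :=
  ∃ s ∈ S, Relation.ReflTransGen (fun x y => g y = some x) s v

/-- Influence spread of a seed set `S`: the expected number of nodes reachable
from `S` in the live-edge sample graph. -/
def influence {V : Type} [Fintype V] [DecidableEq V] (w : V → V → ℝ) (S : Finset V) : ℝ :=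
  ∑ g : V → Option V, sampleProb w g * (Nat.card {v : V // Reachable g S v} : ℝ)

/-- Probability that the random seed set equals `X`, when each `v ∈ VI` is
included independently with probability `p v`. -/
def seedProb {V : Type} [DecidableEq V] (VI : Finset V) (p : V → ℝ) (X : Finset V) : ℝ :=
  (∏ u ∈ X, p u) * ∏ v ∈ VI \ X, (1 - p v)

/-- Expected influence spread of the probabilistic suspect set `(VI, p)`. -/
def influenceVI {V : Type} [Fintype V] [DecidableEq V]
    (w : V → V → ℝ) (VI : Finset V) (p : V → ℝ) : ℝ :=
  ∑ X ∈ VI.powerset, seedProb VI p X * influence w X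

/-- `h = ⟨v₁,…,v_l⟩` is a hitting self-avoiding walk of `(g, X)`: a nonempty
list of pairwise distinct nodes with `g vᵢ = some vᵢ₊₁` for `1 ≤ i < l`
and `{v₁,…,v_l} ∩ X = {v_l}`. -/
def IsHSAW {V : Type} [DecidableEq V] (g : V → Option V) (X : Finset V) (h : List V) : Prop :=
  h ≠ [] ∧ h.Nodup ∧ h.Chain' (fun a b => g a = some b) ∧
    ∀ v ∈ h, (v ∈ X ↔ h.getLast? = some v)

/-- Probability, over the random pair `(g, X)`, that the fixed walk `h`
is a hitting self-avoiding walk of `(g, X)`. -/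
def walkProb {V : Type} [Fintype V] [DecidableEq V]
    (w : V → V → ℝ) (VI : Finset V) (p : V → ℝ) (h : List V) : ℝ :=
  ∑ g : V → Option V, ∑ X ∈ VI.powerset,
    (if IsHSAW g X h then sampleProb w g * seedProb VI p X else 0)

/-- The edge set of a walk `⟨v₁,…,v_l⟩`: the edges `(vᵢ₊₁, vᵢ)` for `1 ≤ i < l`. -/
def walkEdges {V : Type} (h : List V) : List (V × V) :=
  (h.zip h.tail).map Prod.swap


private lemma zip_tail_map_fst {V : Type} (h : List V) :
    (h.zip h.tail).map Prod.fst = h.dropLast := by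
  induction h with
  | nil => simp
  | cons a t ih =>
    cases t with
    | nil => simp
    | cons b t' =>
      simp only [List.tail_cons, List.zip_cons_cons, List.map_cons, List.dropLast_cons₂]
      exact congrArg (a :: ·) ih

private lemma chain'_iff_zip {V : Type} (R : V → V → Prop) (h : List V) :
    h.Chain' R ↔ ∀ p ∈ h.zip h.tail, R p.1 p.2 := by
  induction h with
  | nil => simp [List.Chain', List.isChain_nil]
  | cons a t ih =>
    cases t with
    | nil => simp [List.Chain', List.isChain_singleton]
    | cons b t' =>
      simp only [List.Chain'] at ih ⊢
      rw [List.isChain_cons_cons, ih]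
      simp only [List.tail_cons, List.zip_cons_cons, List.mem_cons]
      constructor
      · rintro ⟨hab, hrest⟩ p hp
        rcases hp with rfl | hp
        · exact hab
        · exact hrest p hp
      · intro hall
        exact ⟨hall (a, b) (Or.inl rfl), fun p hp => hall p (Or.inr hp)⟩

private def nxt {V : Type} [DecidableEq V] (P : List (V × V)) (v : V) : Option V :=
  (P.find? (fun p => p.1 == v)).map Prod.snd

private lemma nxt_eq_some {V : Type} [DecidableEq V] {P : List (V × V)}
    (hP : (P.map Prod.fst).Nodup) {q : V × V} (hq : q ∈ P) : nxt P q.1 = some q.2 := by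
  have hex : (P.find? (fun p => p.1 == q.1)).isSome := by
    rw [List.find?_isSome]; exact ⟨q, hq, by simp⟩
  obtain ⟨r, hr⟩ := Option.isSome_iff_exists.1 hex
  have hrP : r ∈ P := List.mem_of_find?_eq_some hr
  have hr1 : r.1 = q.1 := by simpa using List.find?_some hr
  have hrq : r = q := List.inj_on_of_nodup_map hP hrP hq hr1
  simp [nxt, hr, hrq]

private lemma nxt_eq_none {V : Type} [DecidableEq V] {P : List (V × V)} {v : V}
    (hv : v ∉ P.map Prod.fst) : nxt P v = none := by
  have : P.find? (fun p => p.1 == v) = none := by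
    rw [List.find?_eq_none]
    intro q hq hqv
    exact hv (by
      have : q.1 = v := by simpa using hqv
      exact this ▸ List.mem_map_of_mem (f := Prod.fst) hq)
  simp [nxt, this]

private def Tset {V : Type} [Fintype V] [DecidableEq V] (P : List (V × V)) (v : V) :
    Finset (Option V) :=
  (nxt P v).elim Finset.univ (fun b => {some b})

private lemma forall_mem_Tset {V : Type} [Fintype V] [DecidableEq V] {P : List (V × V)}
    (hP : (P.map Prod.fst).Nodup) (g : V → Option V) :
    (∀ v, g v ∈ Tset P v) ↔ ∀ q ∈ P, g q.1 = some q.2 := by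
  constructor
  · intro hall q hq
    have := hall q.1
    rw [Tset, nxt_eq_some hP hq] at this
    simpa using this
  · intro hall v
    rw [Tset]
    rcases ho : nxt P v with _ | b
    · simp
    · obtain ⟨r, hr⟩ : ∃ r, P.find? (fun p => p.1 == v) = some r := by
        rcases hf : P.find? (fun p => p.1 == v) with _ | r
        · rw [nxt, hf] at ho; simp at ho
        · exact ⟨r, hf⟩
      have hrP := List.mem_of_find?_eq_some hr
      have hr1 : r.1 = v := by simpa using List.find?_some hr
      have hrb : r.2 = b := by rw [nxt, hr] at ho; simpa using ho
      simp only [Option.elim, Finset.mem_singleton]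
      rw [← hr1, ← hrb]
      exact hall r hrP

private lemma sum_sample {V : Type} [Fintype V] [DecidableEq V]
    (w : V → V → ℝ) (P : List (V × V)) (hP : (P.map Prod.fst).Nodup) :
    (∑ g : V → Option V, if ∀ q ∈ P, g q.1 = some q.2 then sampleProb w g else 0)
      = (P.map (fun q => w q.2 q.1)).prod := by
  classical
  have hfil : Finset.univ.filter (fun g : V → Option V => ∀ q ∈ P, g q.1 = some q.2)
      = Fintype.piFinset (Tset P) := by
    ext g
    simp only [Finset.mem_filter, Finset.mem_univ, true_and, Fintype.mem_piFinset]
    exact (forall_mem_Tset hP g).symm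
  rw [← Finset.sum_filter, hfil]
  have h2 : (∑ g ∈ Fintype.piFinset (Tset P), sampleProb w g)
      = ∏ v : V, ∑ o ∈ Tset P v, o.elim (1 - ∑ u : V, w u v) (fun u => w u v) := by
    rw [Finset.prod_univ_sum]
    rfl
  rw [h2]
  have h3 : ∀ v : V, (∑ o ∈ Tset P v, o.elim (1 - ∑ u : V, w u v) (fun u => w u v))
      = (nxt P v).elim 1 (fun b => w b v) := by
    intro v
    rcases ho : nxt P v with _ | b
    · rw [Tset, ho]
      simp only [Option.elim_none]
      rw [Fintype.sum_option]
      simp only [Option.elim_none, Option.elim_some]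
      ring
    · rw [Tset, ho]
      simp
  rw [Finset.prod_congr rfl (fun v _ => h3 v)]
  have h4 : (∏ v : V, (nxt P v).elim 1 (fun b => w b v))
      = ∏ v ∈ (P.map Prod.fst).toFinset, (nxt P v).elim 1 (fun b => w b v) := by
    refine (Finset.prod_subset (Finset.subset_univ _) ?_).symm
    intro v _ hv
    rw [nxt_eq_none (by simpa using hv)]
    rfl
  rw [h4, List.prod_toFinset _ hP, List.map_map]
  congr 1
  refine List.map_congr_left ?_
  intro q hq
  simp only [Function.comp_apply]
  rw [nxt_eq_some hP hq]
  rfl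

private lemma sum_seed {V : Type} [DecidableEq V]
    (VI : Finset V) (p : V → ℝ) (l : V) (hlVI : l ∈ VI) (D : List V) (hlD : l ∉ D)
    (dec : ∀ X : Finset V, Decidable (l ∈ X ∧ ∀ v ∈ D, v ∉ X)) :
    (∑ X ∈ VI.powerset, @ite _ (l ∈ X ∧ ∀ v ∈ D, v ∉ X) (dec X) (seedProb VI p X) 0)
      = p l * ∏ u ∈ VI.filter (fun u => u ∈ D), (1 - p u) := by
  classical
  have e0 : ∀ X : Finset V, @ite _ (l ∈ X ∧ ∀ v ∈ D, v ∉ X) (dec X) (seedProb VI p X) 0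
      = if (l ∈ X ∧ ∀ v ∈ D, v ∉ X) then seedProb VI p X else 0 :=
    fun X => if_congr Iff.rfl rfl rfl
  rw [Finset.sum_congr rfl fun X _ => e0 X]
  set K := VI.filter (fun u => u ∈ D) with hK
  set R := VI \ insert l K with hR
  have hlR : l ∉ R := by simp [hR]
  have hKR : Disjoint K R := by
    rw [Finset.disjoint_left]
    intro x hx hxR
    rw [hR, Finset.mem_sdiff] at hxR
    exact hxR.2 (Finset.mem_insert_of_mem hx)
  have hKVI : K ⊆ VI := Finset.filter_subset _ _
  rw [← Finset.sum_filter]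
  have key : ∀ Y ∈ R.powerset, seedProb VI p (insert l Y)
      = p l * (∏ u ∈ K, (1 - p u)) * ((∏ u ∈ Y, p u) * ∏ u ∈ R \ Y, (1 - p u)) := by
    intro Y hY
    rw [Finset.mem_powerset] at hY
    have hlY : l ∉ Y := fun hmem => hlR (hY hmem)
    have hVIsplit : VI \ insert l Y = K ∪ (R \ Y) := by
      ext x
      have hYR : x ∈ Y → x ∈ VI ∧ ¬(x = l ∨ x ∈ K) := by
        intro hx
        have := hY hx
        rw [hR, Finset.mem_sdiff, Finset.mem_insert] at this
        exact this
      have hxlD : x = l → x ∉ D := fun hx => hx ▸ hlD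
      simp only [hR, hK, Finset.mem_sdiff, Finset.mem_insert, Finset.mem_union,
        Finset.mem_filter] at *
      tauto
    have hdisj : Disjoint K (R \ Y) := hKR.mono_right (Finset.sdiff_subset)
    rw [seedProb, Finset.prod_insert hlY, hVIsplit, Finset.prod_union hdisj]
    ring
  refine Eq.trans (Finset.sum_bij' (t := R.powerset)
      (g := fun Y => seedProb VI p (insert l Y))
      (fun X _ => X.erase l) (fun Y _ => insert l Y) ?_ ?_ ?_ ?_ ?_) ?_
  · intro X hX
    simp only [Finset.mem_filter, Finset.mem_powerset] at hX
    obtain ⟨hXVI, hlX, hDX⟩ := hX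
    rw [Finset.mem_powerset]
    intro x hx
    rw [Finset.mem_erase] at hx
    rw [hR, Finset.mem_sdiff, Finset.mem_insert]
    refine ⟨hXVI hx.2, ?_⟩
    rintro (rfl | hxK)
    · exact hx.1 rfl
    · rw [hK, Finset.mem_filter] at hxK
      exact hDX x hxK.2 hx.2
  · intro Y hY
    rw [Finset.mem_powerset] at hY
    simp only [Finset.mem_filter, Finset.mem_powerset]
    refine ⟨?_, Finset.mem_insert_self _ _, ?_⟩
    · intro x hx
      rcases Finset.mem_insert.1 hx with rfl | hx
      · exact hlVI
      · exact (Finset.mem_sdiff.1 (hR ▸ hY hx)).1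
    · intro v hv hvmem
      rcases Finset.mem_insert.1 hvmem with rfl | hvY
      · exact hlD hv
      · have := hY hvY
        rw [hR, Finset.mem_sdiff, Finset.mem_insert] at this
        exact this.2 (Or.inr (by rw [hK, Finset.mem_filter]; exact ⟨this.1, hv⟩))
  · intro X hX
    simp only [Finset.mem_filter, Finset.mem_powerset] at hX
    exact Finset.insert_erase hX.2.1
  · intro Y hY
    rw [Finset.mem_powerset] at hY
    exact Finset.erase_insert (fun hmem => hlR (hY hmem))
  · intro X hX
    simp only [Finset.mem_filter, Finset.mem_powerset] at hX
    rw [Finset.insert_erase hX.2.1]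
  rw [Finset.sum_congr rfl key, ← Finset.mul_sum, ← Finset.prod_add]
  simp

/-- Walk probability: for a fixed nonempty walk `h` of pairwise distinct nodes
ending at a node of `VI`, the probability over the random pair `(g, X)` that
`h` is an HSAW of `(g, X)` equals
`p(v_l) · ∏_{u ∈ VI ∩ {v₁,…,v_{l−1}}} (1 − p u) · ∏_{i=1}^{l−1} w(vᵢ₊₁, vᵢ)`. -/
theorem stmt_3 {V : Type} [Fintype V] [DecidableEq V]
    (E : Finset (V × V)) (w : V → V → ℝ)
    (hw01 : ∀ u v, 0 ≤ w u v ∧ w u v ≤ 1)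
    (hwE : ∀ u v, (u, v) ∉ E → w u v = 0)
    (hwsum : ∀ v, ∑ u : V, w u v ≤ 1)
    (VI : Finset V) (p : V → ℝ) (hp : ∀ v ∈ VI, 0 ≤ p v ∧ p v ≤ 1)
    (h : List V) (hne : h ≠ []) (hnd : h.Nodup)
    (hlast : h.getLast hne ∈ VI) :
    walkProb w VI p h
      = p (h.getLast hne)
        * (∏ u ∈ VI.filter (fun u => u ∈ h.dropLast), (1 - p u))
        * ((h.zip h.tail).map (fun e : V × V => w e.2 e.1)).prod := by
  classical
  rw [walkProb]
  set l := h.getLast hne with hl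
  have hsplit : h.dropLast ++ [l] = h := List.dropLast_append_getLast hne
  have hlnotD : l ∉ h.dropLast := by
    have hnd2 : (h.dropLast ++ [l]).Nodup := by rw [hsplit]; exact hnd
    rw [List.nodup_append] at hnd2
    intro hmem
    exact hnd2.2.2 l hmem l (List.mem_singleton_self l) rfl
  have hDne : ∀ v ∈ h.dropLast, v ≠ l := fun v hv heq => hlnotD (heq ▸ hv)
  have hmem_iff : ∀ v, v ∈ h ↔ v ∈ h.dropLast ∨ v = l := by
    intro v
    conv_lhs => rw [← hsplit]
    simp
  have hglq : h.getLast? = some l := List.getLast?_eq_getLast hne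
  have hsaw : ∀ (g : V → Option V) (X : Finset V),
      IsHSAW g X h
      ↔ ((∀ q ∈ h.zip h.tail, g q.1 = some q.2) ∧ (l ∈ X ∧ ∀ v ∈ h.dropLast, v ∉ X)) := by
    intro g X
    unfold IsHSAW
    constructor
    · rintro ⟨-, -, hc, hX⟩
      refine ⟨(chain'_iff_zip _ h).1 hc, ?_, ?_⟩
      · exact (hX l (List.getLast_mem hne)).2 hglq
      · intro v hv hvX
        have h1 := (hX v ((hmem_iff v).2 (Or.inl hv))).1 hvX
        rw [hglq] at h1
        exact hDne v hv (Option.some_injective _ h1.symm)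
    · rintro ⟨hc, hlX, hDX⟩
      refine ⟨hne, hnd, (chain'_iff_zip _ h).2 hc, ?_⟩
      intro v hv
      rcases (hmem_iff v).1 hv with hvD | rfl
      · constructor
        · intro hvX; exact absurd hvX (hDX v hvD)
        · intro hq
          rw [hglq] at hq
          exact absurd (Option.some_injective _ hq.symm) (hDne v hvD)
      · exact ⟨fun _ => hglq, fun _ => hlX⟩
  have hfac : (∑ g : V → Option V, ∑ X ∈ VI.powerset,
      (if IsHSAW g X h then sampleProb w g * seedProb VI p X else 0))
      = (∑ g : V → Option V, if ∀ q ∈ h.zip h.tail, g q.1 = some q.2 then sampleProb w g else 0)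
        * (∑ X ∈ VI.powerset,
            if (l ∈ X ∧ ∀ v ∈ h.dropLast, v ∉ X) then seedProb VI p X else 0) := by
    rw [Finset.sum_mul_sum]
    refine Finset.sum_congr rfl fun g _ => Finset.sum_congr rfl fun X _ => ?_
    rw [if_congr (hsaw g X) rfl rfl]
    by_cases h1 : ∀ q ∈ h.zip h.tail, g q.1 = some q.2 <;>
      by_cases h2 : (l ∈ X ∧ ∀ v ∈ h.dropLast, v ∉ X)
    · rw [if_pos ⟨h1, h2⟩, if_pos h1, if_pos h2]
    · rw [if_neg (fun hc => h2 hc.2), if_neg h2, mul_zero]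
    · rw [if_neg (fun hc => h1 hc.1), if_neg h1, zero_mul]
    · rw [if_neg (fun hc => h1 hc.1), if_neg h1, zero_mul]
  rw [hfac]
  have hPnodup : ((h.zip h.tail).map Prod.fst).Nodup := by
    rw [zip_tail_map_fst]
    exact (List.dropLast_sublist h).nodup hnd
  rw [sum_sample w _ hPnodup, sum_seed VI p l hlast h.dropLast hlnotD _]
  ring
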